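/- Define, for k > 0 and Dtheta in (-pi, pi) with 1 + k^2 + 2k*cos(Dtheta) > 0, the function Dtheta_plus(k, Dtheta) = sign(Dtheta) * arccos( (1 + k*cos(Dtheta)) / sqrt(1 + k^2 + 2k*cos(Dtheta)) ) - (k/(1+k)) * Dtheta. Then for every fixed Dtheta in (-pi, pi): (i) Dtheta_plus(1, Dtheta) = 0; (ii) the limit of Dtheta_plus(k, Dtheta) as k tends to 0+ is 0; (iii) the limit of Dtheta_plus(k, Dtheta) as k tends to +infinity is 0. (Proposition 9, degenerate cases.) -/

import Mathlib

open Filter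

noncomputable section

/-- The difference between the posterior mean angle of the MFD-based Bayesian filter and that
of the CGD-based Bayesian filter. -/
def DthetaPlus (k Dtheta : ℝ) : ℝ :=
  Real.sign Dtheta *
      Real.arccos ((1 + k * Real.cos Dtheta) /
        Real.sqrt (1 + k ^ 2 + 2 * k * Real.cos Dtheta)) -
    k / (1 + k) * Dtheta

lemma sign_mul_abs_real (x : ℝ) : Real.sign x * |x| = x := by
  rcases lt_trichotomy x 0 with h | h | h
  · rw [Real.sign_of_neg h, abs_of_neg h]; ring
  · simp [h]
  · rw [Real.sign_of_pos h, abs_of_pos h]; ring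

/-- Proposition 9 (degenerate cases): for fixed `Dθ ∈ (-π, π)`,
`DthetaPlus 1 Dθ = 0`, `DthetaPlus k Dθ → 0` as `k → 0⁺`, and
`DthetaPlus k Dθ → 0` as `k → +∞`. -/
theorem stmt7 (Dtheta : ℝ) (hd1 : -Real.pi < Dtheta) (hd2 : Dtheta < Real.pi) :
    DthetaPlus 1 Dtheta = 0 ∧
    Tendsto (fun k : ℝ => DthetaPlus k Dtheta) (nhdsWithin 0 (Set.Ioi 0)) (nhds 0) ∧
    Tendsto (fun k : ℝ => DthetaPlus k Dtheta) atTop (nhds 0) := by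
  have habs : |Dtheta| < Real.pi := abs_lt.mpr ⟨hd1, hd2⟩
  have habs0 : (0:ℝ) ≤ |Dtheta| := abs_nonneg _
  set c := Real.cos Dtheta with hcdef
  have hcabs : Real.cos |Dtheta| = c := Real.cos_abs Dtheta
  have hc1 : -1 < c := by
    have := Real.cos_lt_cos_of_nonneg_of_le_pi habs0 le_rfl habs
    rw [Real.cos_pi] at this
    rw [← hcabs]; linarith
  have hc2 : c ≤ 1 := Real.cos_le_one _
  have harccos : Real.arccos c = |Dtheta| := by
    rw [← hcabs, Real.arccos_cos habs0 habs.le]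
  have hsma : Real.sign Dtheta * |Dtheta| = Dtheta := sign_mul_abs_real Dtheta
  -- Part (i)
  have part1 : DthetaPlus 1 Dtheta = 0 := by
    have h1c : (0:ℝ) < 1 + c := by linarith
    have hs2 : (0:ℝ) < Real.sqrt 2 := Real.sqrt_pos.mpr (by norm_num)
    have hs1c : (0:ℝ) < Real.sqrt (1 + c) := Real.sqrt_pos.mpr h1c
    have hm : Real.sqrt (1 + c) * Real.sqrt (1 + c) = 1 + c :=
      Real.mul_self_sqrt h1c.le
    have key : (1 + 1 * c) / Real.sqrt (1 + 1 ^ 2 + 2 * 1 * c)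
        = Real.cos (|Dtheta| / 2) := by
      rw [Real.cos_half (by linarith) habs.le, hcabs]
      have h2 : (1 : ℝ) + 1 ^ 2 + 2 * 1 * c = 2 * (1 + c) := by ring
      rw [h2, Real.sqrt_mul (by norm_num), Real.sqrt_div h1c.le]
      field_simp
      linear_combination (-1 : ℝ) * hm
    have harc2 : Real.arccos (Real.cos (|Dtheta| / 2)) = |Dtheta| / 2 :=
      Real.arccos_cos (by linarith) (by linarith [Real.pi_pos])
    unfold DthetaPlus
    rw [← hcdef, key, harc2]
    have : Real.sign Dtheta * (|Dtheta| / 2) = Dtheta / 2 := by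
      rw [mul_div_assoc'] at *; linarith [hsma]
    rw [this]; ring
  refine ⟨part1, ?_, ?_⟩
  -- Part (ii)
  · have hg0 : ContinuousAt
        (fun k : ℝ => (1 + k * c) / Real.sqrt (1 + k ^ 2 + 2 * k * c)) 0 := by
      apply ContinuousAt.div (by fun_prop) (by fun_prop)
      norm_num
    have hF : ContinuousAt (fun k => DthetaPlus k Dtheta) 0 := by
      unfold DthetaPlus
      rw [← hcdef]
      apply ContinuousAt.sub
      · exact continuousAt_const.mul (Real.continuous_arccos.continuousAt.comp hg0)
      · exact (ContinuousAt.div (by fun_prop) (by fun_prop) (by norm_num)).mul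
          continuousAt_const
    have h0 : DthetaPlus 0 Dtheta = 0 := by
      unfold DthetaPlus; norm_num
    have := hF.tendsto
    rw [h0] at this
    exact this.mono_left nhdsWithin_le_nhds
  -- Part (iii)
  · set G : ℝ → ℝ := fun u =>
      Real.sign Dtheta * Real.arccos ((u + c) / Real.sqrt (u ^ 2 + 1 + 2 * u * c)) -
        1 / (u + 1) * Dtheta with hGdef
    have hGcont : ContinuousAt G 0 := by
      apply ContinuousAt.sub
      · refine continuousAt_const.mul (Real.continuous_arccos.continuousAt.comp ?_)
        apply ContinuousAt.div (by fun_prop) (by fun_prop)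
        norm_num
      · exact (ContinuousAt.div (by fun_prop) (by fun_prop) (by norm_num)).mul
          continuousAt_const
    have hG0 : G 0 = 0 := by
      simp only [hGdef]
      norm_num [harccos, hsma]
    have hcomp : Tendsto (fun k : ℝ => G k⁻¹) atTop (nhds 0) := by
      have := hGcont.tendsto.comp tendsto_inv_atTop_zero
      rwa [hG0] at this
    refine hcomp.congr' ?_
    filter_upwards [eventually_ge_atTop (1:ℝ)] with k hk
    have hkpos : (0:ℝ) < k := by linarith
    have hq : (0:ℝ) < 1 + k ^ 2 + 2 * k * c := by
      nlinarith [sq_nonneg (k - 1), mul_pos hkpos (by linarith : (0:ℝ) < 1 + c)]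
    have hsq : (0:ℝ) < Real.sqrt (1 + k ^ 2 + 2 * k * c) := Real.sqrt_pos.mpr hq
    have hS : Real.sqrt ((k⁻¹) ^ 2 + 1 + 2 * k⁻¹ * c)
        = Real.sqrt (1 + k ^ 2 + 2 * k * c) / k := by
      rw [show (k⁻¹) ^ 2 + 1 + 2 * k⁻¹ * c = (1 + k ^ 2 + 2 * k * c) / k ^ 2 by
          field_simp,
        Real.sqrt_div hq.le, Real.sqrt_sq hkpos.le]
    have harg : (k⁻¹ + c) / Real.sqrt ((k⁻¹) ^ 2 + 1 + 2 * k⁻¹ * c)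
        = (1 + k * c) / Real.sqrt (1 + k ^ 2 + 2 * k * c) := by
      rw [hS]
      field_simp
    have hfrac : (1 : ℝ) / (k⁻¹ + 1) = k / (1 + k) := by
      field_simp
    simp only [hGdef, harg, hfrac]
    unfold DthetaPlus
    rw [← hcdef]
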